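/- Let C = [0,1], let A be a finite action set, and let u: A × C → ℝ be affine in y. Suppose predictions ŷ₁,...,ŷ_T take values in a finite grid C_ε, outcomes y₁,...,y_T ∈ [0,1], and for every pair y₁ ≤ y₂ in C_ε the interval-conditioned bias satisfies |(1/T)·Σ_{t: ŷ_t ∈ [y₁,y₂]}(ŷ_t − y_t)| ≤ α. If the agent best responds at each round (a_t ∈ argmax_a u(a, ŷ_t), with consistent tie-breaking), then for every action a ∈ A, the bias conditioned on playing a satisfies |(1/T)·Σ_{t: a_t = a}(ŷ_t − y_t)| ≤ α. -/

import Mathlib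

open Finset

lemma br_mid {A : Type*} [LinearOrder A]
    (u : A → ℝ → ℝ)
    (haff : ∀ a, ∃ v c : ℝ, ∀ y, u a y = v * y + c)
    (BR : ℝ → A)
    (hBR : ∀ y, (∀ b, u (BR y) y ≥ u b y) ∧
      ∀ a', (∀ b, u a' y ≥ u b y) → a' ≤ BR y)
    {a : A} {y1 y y3 : ℝ} (h1 : BR y1 = a) (h3 : BR y3 = a)
    (h12 : y1 ≤ y) (h23 : y ≤ y3) : BR y = a := by
  by_contra hne
  set a' := BR y with ha'
  obtain ⟨v, c, hu⟩ := haff a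
  obtain ⟨v', c', hu'⟩ := haff a'
  have g1 : u a y1 ≥ u a' y1 := by have := (hBR y1).1 a'; rwa [h1] at this
  have g3 : u a y3 ≥ u a' y3 := by have := (hBR y3).1 a'; rwa [h3] at this
  have gy : u a' y ≥ u a y := (hBR y).1 a
  rw [hu, hu'] at g1 g3 gy
  -- equality at y
  have geq : v * y + c = v' * y + c' := by
    rcases eq_or_lt_of_le (h12.trans h23) with h13 | h13
    · have hy1 : y = y1 := le_antisymm (h13 ▸ h23) h12
      subst hy1; linarith
    · nlinarith [mul_nonneg (by linarith : (0:ℝ) ≤ v*y1+c - (v'*y1+c')) (sub_nonneg.2 h23),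
        mul_nonneg (by linarith : (0:ℝ) ≤ v*y3+c - (v'*y3+c')) (sub_nonneg.2 h12),
        sub_pos.2 h13]
  have hmax : ∀ b, u a y ≥ u b y := by
    intro b
    have := (hBR y).1 b
    calc u a y = u a' y := by rw [hu, hu', geq]
    _ ≥ u b y := this
  have hle : a ≤ a' := (hBR y).2 a hmax
  have hlt : a < a' := lt_of_le_of_ne hle (fun h => hne h.symm)
  rcases eq_or_lt_of_le h12 with heq | hlt1
  · have geq1 : v * y1 + c = v' * y1 + c' := by rw [heq]; exact geq
    have hmax' : ∀ b, u a' y1 ≥ u b y1 := by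
      intro b
      have := (hBR y1).1 b
      rw [h1] at this
      calc u a' y1 = u a y1 := by rw [hu, hu', geq1]
      _ ≥ u b y1 := this
    exact absurd ((hBR y1).2 a' hmax') (by rw [h1]; exact not_le.2 hlt)
  · have geq3 : v * y3 + c = v' * y3 + c' := by
      nlinarith [mul_nonneg (by linarith : (0:ℝ) ≤ v*y1+c - (v'*y1+c')) (sub_nonneg.2 h23),
        sub_pos.2 hlt1]
    have hmax' : ∀ b, u a' y3 ≥ u b y3 := by
      intro b
      have := (hBR y3).1 b
      rw [h3] at this
      calc u a' y3 = u a y3 := by rw [hu, hu', geq3]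
      _ ≥ u b y3 := this
    exact absurd ((hBR y3).2 a' hmax') (by rw [h3]; exact not_le.2 hlt)

theorem interval_bias_implies_best_response_bias
    {A : Type*} [Fintype A] [LinearOrder A]
    (T : ℕ) (hT : 0 < T)
    (Cε : Finset ℝ) (hCε : ↑Cε ⊆ Set.Icc (0:ℝ) 1)
    (yhat yout : Fin T → ℝ)
    (hyhat : ∀ t, yhat t ∈ Cε)
    (hyout : ∀ t, yout t ∈ Set.Icc (0:ℝ) 1)
    (u : A → ℝ → ℝ)
    (haff : ∀ a, ∃ v c : ℝ, ∀ y, u a y = v * y + c)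
    (BR : ℝ → A)
    (hBR : ∀ y, (∀ b, u (BR y) y ≥ u b y) ∧
      ∀ a', (∀ b, u a' y ≥ u b y) → a' ≤ BR y)
    (act : Fin T → A) (hact : ∀ t, act t = BR (yhat t))
    (α : ℝ)
    (hbias : ∀ y₁ ∈ Cε, ∀ y₂ ∈ Cε, y₁ ≤ y₂ →
      |(1 / (T : ℝ)) * ∑ t ∈ Finset.univ.filter
          (fun t => y₁ ≤ yhat t ∧ yhat t ≤ y₂), (yhat t - yout t)| ≤ α) :
    ∀ a : A,
      |(1 / (T : ℝ)) * ∑ t ∈ Finset.univ.filter (fun t => act t = a),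
        (yhat t - yout t)| ≤ α := by
  intro a
  have t0 : Fin T := ⟨0, hT⟩
  have hα : 0 ≤ α := le_trans (abs_nonneg _)
    (hbias _ (hyhat t0) _ (hyhat t0) le_rfl)
  set S := Cε.filter (fun y => BR y = a) with hS
  by_cases hSne : S.Nonempty
  · set y₁ := S.min' hSne
    set y₂ := S.max' hSne
    have h₁ := mem_filter.mp (S.min'_mem hSne)
    have h₂ := mem_filter.mp (S.max'_mem hSne)
    have hfe : Finset.univ.filter (fun t => act t = a)
        = Finset.univ.filter (fun t : Fin T => y₁ ≤ yhat t ∧ yhat t ≤ y₂) := by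
      ext t
      simp only [mem_filter, mem_univ, true_and]
      constructor
      · intro h
        have hm : yhat t ∈ S := by
          exact mem_filter.mpr ⟨hyhat t, by rw [← hact t, h]⟩
        exact ⟨S.min'_le _ hm, S.le_max' _ hm⟩
      · intro ⟨hl, hr⟩
        rw [hact t]
        exact br_mid u haff BR hBR h₁.2 h₂.2 hl hr
    rw [hfe]
    exact hbias _ h₁.1 _ h₂.1 (S.min'_le _ (S.max'_mem hSne))
  · have hfe : Finset.univ.filter (fun t => act t = a) = ∅ := by
      rw [filter_eq_empty_iff]
      intro t _ h
      exact hSne ⟨yhat t, mem_filter.mpr ⟨hyhat t, by rw [← hact t, h]⟩⟩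
    rw [hfe, sum_empty, mul_zero, abs_zero]
    exact hα
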